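/- Define for d ≥ 2 and z ∈ (0, √d·π/2): σ²(z) = 1 − A(z)²/(1 − C(z)²), where A(z) = −√d cos^{d−1}(z/√d) sin(z/√d) and C(z) = cos^d(z/√d). Then for every fixed z > 0, lim_{d→∞} σ²(z) = (1 − (1 + z²) e^{−z²})/(1 − e^{−z²}). -/

import Mathlib

open Real Filter Topology

open Topology in
private lemma sin_div_tendsto' : Tendsto (fun x : ℝ => Real.sin x / x) (𝓝[≠] 0) (𝓝 1) := by
  have h := Real.hasDerivAt_sin 0
  rw [hasDerivAt_iff_tendsto_slope] at h
  simp only [Real.cos_zero] at h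
  refine h.congr (fun x => ?_)
  simp [slope_def_field]

open Topology in
private lemma log_one_add_div_tendsto' :
    Tendsto (fun y : ℝ => Real.log (1 + y) / y) (𝓝[≠] 0) (𝓝 1) := by
  have h : HasDerivAt (fun y : ℝ => Real.log (1 + y)) 1 0 := by
    have := (Real.hasDerivAt_log (by norm_num : (1:ℝ) + 0 ≠ 0)).comp 0
      ((hasDerivAt_id (0:ℝ)).const_add 1)
    simpa [Function.comp_def] using this
  rw [hasDerivAt_iff_tendsto_slope] at h
  refine h.congr (fun x => ?_)
  simp [slope_def_field]

private lemma cos_sub_one_eq (x : ℝ) : Real.cos x - 1 = -(2 * Real.sin (x / 2) ^ 2) := by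
  have h1 : Real.cos (2 * (x / 2)) = 2 * Real.cos (x / 2) ^ 2 - 1 := Real.cos_two_mul _
  have h2 : Real.sin (x / 2) ^ 2 + Real.cos (x / 2) ^ 2 = 1 := Real.sin_sq_add_cos_sq _
  have : (2 : ℝ) * (x / 2) = x := by ring
  rw [this] at h1
  nlinarith

open Topology in
private lemma log_cos_div_sq :
    Tendsto (fun x : ℝ => Real.log (Real.cos x) / x ^ 2) (𝓝[≠] 0) (𝓝 (-(1/2))) := by
  -- cos x - 1 tends to 0 within ≠ 0
  have hcos0 : Tendsto (fun x : ℝ => Real.cos x - 1) (𝓝[≠] 0) (𝓝[≠] 0) := by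
    refine tendsto_nhdsWithin_iff.2 ⟨?_, ?_⟩
    · have : Tendsto (fun x : ℝ => Real.cos x - 1) (𝓝 0) (𝓝 (Real.cos 0 - 1)) :=
        (Real.continuous_cos.sub continuous_const).tendsto 0
      simpa using this.mono_left nhdsWithin_le_nhds
    · filter_upwards [self_mem_nhdsWithin,
        nhdsWithin_le_nhds (Ioo_mem_nhds (by linarith [Real.pi_pos] : -π < (0:ℝ))
          Real.pi_pos)] with x hx hx2
      have hx' : x ≠ 0 := hx
      have hhalf : Real.sin (x / 2) ≠ 0 := by
        rw [Ne, Real.sin_eq_zero_iff_of_lt_of_lt (by cases hx2; linarith)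
          (by cases hx2; linarith)]
        intro h; exact hx' (by linarith)
      have := cos_sub_one_eq x
      intro h
      rw [Set.mem_singleton_iff] at h
      rw [h] at this
      exact hhalf (pow_eq_zero_iff (n := 2) (by norm_num) |>.1 (by linarith))
  -- first factor
  have h1 : Tendsto (fun x : ℝ => Real.log (1 + (Real.cos x - 1)) / (Real.cos x - 1))
      (𝓝[≠] 0) (𝓝 1) := log_one_add_div_tendsto'.comp hcos0
  -- second factor : (cos x - 1)/x² → -1/2
  have hhalfmap : Tendsto (fun x : ℝ => x / 2) (𝓝[≠] 0) (𝓝[≠] 0) := by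
    refine tendsto_nhdsWithin_iff.2 ⟨?_, ?_⟩
    · have : Tendsto (fun x : ℝ => x / 2) (𝓝 0) (𝓝 (0 / 2)) :=
        (continuous_id.div_const 2).tendsto 0
      simpa using this.mono_left nhdsWithin_le_nhds
    · filter_upwards [self_mem_nhdsWithin] with x hx
      simpa using div_ne_zero (hx : x ≠ 0) two_ne_zero
  have h2 : Tendsto (fun x : ℝ => (Real.cos x - 1) / x ^ 2) (𝓝[≠] 0) (𝓝 (-(1/2))) := by
    have hs : Tendsto (fun x : ℝ => Real.sin (x / 2) / (x / 2)) (𝓝[≠] 0) (𝓝 1) :=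
      sin_div_tendsto'.comp hhalfmap
    have := ((hs.mul hs).const_mul (-(1/2) : ℝ))
    simp only [mul_one] at this
    refine this.congr' ?_
    filter_upwards [self_mem_nhdsWithin] with x hx
    have hx' : (x : ℝ) ≠ 0 := hx
    rw [cos_sub_one_eq]
    field_simp
  have := h1.mul h2
  rw [one_mul] at this
  refine this.congr' ?_
  filter_upwards [hcos0.eventually self_mem_nhdsWithin, self_mem_nhdsWithin] with x hc hx
  have hc' : Real.cos x - 1 ≠ 0 := hc
  rw [show (1 : ℝ) + (Real.cos x - 1) = Real.cos x by ring]
  field_simp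

/-- Limit of the conditional variance `σ²(z) = 1 - A²/(1-C²)` as `d → ∞`. -/
theorem kostlan_sigma_sq_tendsto (z : ℝ) (hz : 0 < z) :
    Tendsto (fun d : ℕ =>
        1 - (-(Real.sqrt d) * Real.cos (z / Real.sqrt d) ^ (d - 1)
              * Real.sin (z / Real.sqrt d)) ^ 2
            / (1 - (Real.cos (z / Real.sqrt d) ^ d) ^ 2))
      atTop
      (nhds ((1 - (1 + z ^ 2) * Real.exp (-z ^ 2)) / (1 - Real.exp (-z ^ 2)))) := by
  have hsqrt : Tendsto (fun d : ℕ => Real.sqrt d) atTop atTop := by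
    refine (tendsto_atTop_atTop_of_monotone (fun a b hab => Real.sqrt_le_sqrt hab)
      (fun b => ⟨b ^ 2, by rw [Real.sqrt_sq_eq_abs]; exact le_abs_self b⟩)).comp
      tendsto_natCast_atTop_atTop
  -- x d = z / √d tends to 0 within ≠0
  have hx0 : Tendsto (fun d : ℕ => z / Real.sqrt d) atTop (𝓝 0) :=
    tendsto_const_nhds.div_atTop hsqrt
  have hxpos : ∀ᶠ d : ℕ in atTop, 0 < z / Real.sqrt d := by
    filter_upwards [eventually_ge_atTop 1] with d hd
    have : (0:ℝ) < Real.sqrt d := Real.sqrt_pos.2 (by exact_mod_cast Nat.pos_of_ne_zero (by omega))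
    positivity
  have hx : Tendsto (fun d : ℕ => z / Real.sqrt d) atTop (nhdsWithin 0 {0}ᶜ) :=
    tendsto_nhdsWithin_iff.2 ⟨hx0, by filter_upwards [hxpos] with d hd; exact ne_of_gt hd⟩
  -- eventually cos > 0
  have hcpos : ∀ᶠ d : ℕ in atTop, 0 < Real.cos (z / Real.sqrt d) := by
    filter_upwards [hx0.eventually (Ioo_mem_nhds (a := -(π/2)) (b := π/2)
      (by linarith [Real.pi_pos]) (by linarith [Real.pi_pos]))] with d hd
    exact Real.cos_pos_of_mem_Ioo hd
  -- d * log cos(z/√d) → -z²/2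
  have hlog : Tendsto (fun d : ℕ => (d : ℝ) * Real.log (Real.cos (z / Real.sqrt d)))
      atTop (𝓝 (-(z ^ 2) / 2)) := by
    have := (log_cos_div_sq.comp hx).const_mul (z ^ 2)
    rw [show z ^ 2 * (-(1/2)) = -(z ^ 2)/2 by ring] at this
    refine this.congr' ?_
    filter_upwards [eventually_ge_atTop 1] with d hd
    have hdpos : (0:ℝ) < d := by exact_mod_cast Nat.pos_of_ne_zero (by omega)
    have hsq : (z / Real.sqrt d) ^ 2 = z ^ 2 / d := by
      rw [div_pow, Real.sq_sqrt hdpos.le]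
    simp only [Function.comp_apply, hsq]
    field_simp
  -- C d = cos^d → exp(-z²/2)
  have hC : Tendsto (fun d : ℕ => Real.cos (z / Real.sqrt d) ^ d) atTop
      (𝓝 (Real.exp (-(z ^ 2) / 2))) := by
    have := (Real.continuous_exp.tendsto _).comp hlog
    refine this.congr' ?_
    filter_upwards [hcpos] with d hd
    simp only [Function.comp_apply]
    rw [Real.exp_nat_mul, Real.exp_log hd]
  have hcos1 : Tendsto (fun d : ℕ => Real.cos (z / Real.sqrt d)) atTop (𝓝 1) := by
    have := (Real.continuous_cos.tendsto 0).comp hx0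
    simpa [Function.comp_def] using this
  -- cos^(d-1) → exp(-z²/2)
  have hCpred : Tendsto (fun d : ℕ => Real.cos (z / Real.sqrt d) ^ (d - 1)) atTop
      (𝓝 (Real.exp (-(z ^ 2) / 2))) := by
    have := hC.div hcos1 one_ne_zero
    rw [div_one] at this
    refine this.congr' ?_
    filter_upwards [hcpos, eventually_ge_atTop 1] with d hc hd
    simp only [Pi.div_apply]
    rw [eq_comm, eq_div_iff (ne_of_gt hc), ← pow_succ, Nat.sub_add_cancel hd]
  -- √d sin(z/√d) → z
  have hS : Tendsto (fun d : ℕ => Real.sqrt d * Real.sin (z / Real.sqrt d)) atTop (𝓝 z) := by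
    have := (sin_div_tendsto'.comp hx).const_mul z
    simp only [mul_one] at this
    refine this.congr' ?_
    filter_upwards [eventually_ge_atTop 1] with d hd
    have hdpos : (0:ℝ) < Real.sqrt d :=
      Real.sqrt_pos.2 (by exact_mod_cast Nat.pos_of_ne_zero (by omega))
    simp only [Function.comp_apply]
    field_simp
  -- A d → -(z * exp(-z²/2))
  have hA : Tendsto (fun d : ℕ => -(Real.sqrt d) * Real.cos (z / Real.sqrt d) ^ (d - 1)
      * Real.sin (z / Real.sqrt d)) atTop (𝓝 (-(z * Real.exp (-(z ^ 2) / 2)))) := by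
    have := (hS.mul hCpred).neg
    refine this.congr (fun d => by ring)
  have hexp2 : Real.exp (-(z ^ 2) / 2) ^ 2 = Real.exp (-z ^ 2) := by
    rw [sq, ← Real.exp_add]; ring_nf
  have hA2 : Tendsto (fun d : ℕ => (-(Real.sqrt d) * Real.cos (z / Real.sqrt d) ^ (d - 1)
      * Real.sin (z / Real.sqrt d)) ^ 2) atTop (𝓝 (z ^ 2 * Real.exp (-z ^ 2))) := by
    have := hA.pow 2
    rw [show (-(z * Real.exp (-(z ^ 2) / 2))) ^ 2 = z ^ 2 * Real.exp (-(z ^ 2)/2) ^ 2 by ring,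
      hexp2] at this
    exact this
  have hden : Tendsto (fun d : ℕ => 1 - (Real.cos (z / Real.sqrt d) ^ d) ^ 2) atTop
      (𝓝 (1 - Real.exp (-z ^ 2))) := by
    have := (hC.pow 2).const_sub 1
    rwa [hexp2] at this
  have hne : 1 - Real.exp (-z ^ 2) ≠ 0 := by
    have : Real.exp (-z ^ 2) < 1 := Real.exp_lt_one_iff.2 (by nlinarith)
    linarith
  have hfinal := (hA2.div hden hne).const_sub 1
  have heq : (1 : ℝ) - z ^ 2 * Real.exp (-z ^ 2) / (1 - Real.exp (-z ^ 2))
      = (1 - (1 + z ^ 2) * Real.exp (-z ^ 2)) / (1 - Real.exp (-z ^ 2)) := by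
    field_simp
    ring
  rwa [heq] at hfinal
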